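/- Let k be an algebraically closed field of characteristic ≠ 2. There do not exist s, t ∈ k((x,y)) (the fraction field of k[[x,y]]) with x - s² = (y² - x²(x-1))·t such that moreover s, t ∈ k[[x,y]]; i.e., x is not a square modulo y² - x²(x-1) in k[[x,y]]. -/

import Mathlib

theorem x_not_square_mod_nodal_cubic_power_series
    (k : Type*) [Field k] [IsAlgClosed k] (h2 : (2 : k) ≠ 0) :
    ¬ ∃ s t : MvPowerSeries (Fin 2) k,
      MvPowerSeries.X 0 - s ^ 2
        = ((MvPowerSeries.X 1) ^ 2
            - (MvPowerSeries.X 0 : MvPowerSeries (Fin 2) k) ^ 2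
                * (MvPowerSeries.X 0 - 1)) * t := by
  rintro ⟨s, t, h⟩
  have h0 := congrArg (MvPowerSeries.constantCoeff (σ := Fin 2) (R := k)) h
  simp [map_sub, map_mul, map_pow, MvPowerSeries.constantCoeff_X] at h0
  have h1 := congrArg (MvPowerSeries.coeff (R := k) (Finsupp.single (0 : Fin 2) 1)) h
  rw [map_sub, pow_two, MvPowerSeries.coeff_mul, MvPowerSeries.coeff_mul,
    Finsupp.antidiagonal_single, Finset.sum_map, Finset.sum_map] at h1
  simp [Finset.Nat.antidiagonal_succ, MvPowerSeries.coeff_X,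
    MvPowerSeries.coeff_zero_eq_constantCoeff, h0,
    map_sub, map_mul, map_pow] at h1
  rw [mul_sub, mul_one, ← pow_succ] at h1
  simp [MvPowerSeries.X_pow_eq, MvPowerSeries.coeff_monomial, Finsupp.single_eq_single_iff] at h1
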